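/- An LFSA S is strongly initial-state opaque with respect to Q_S if and only if (Q0 ≠ ∅ implies Q0 ⊄ Q_S) and for every q0 ∈ Q0 ∩ Q_S, all states reachable in CC(S_ε, S_dss_obs^ε) from (q0, q_{0,dss,obs}) have nonempty right component, where q_{0,dss,obs} is the initial state of the observer of the secret-deleted automaton S_dss. -/

import Mathlib

/-- A labeled finite-state automaton (LFSA): transition relation `δ`,
initial states `Q0`, labeling `lab` (where `none` stands for ε, i.e. unobservable). -/
structure LFSA (Q : Type*) (E : Type*) (A : Type*) where
  δ : Q → E → Q → Prop
  Q0 : Set Q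
  lab : E → Option A

namespace LFSA

variable {Q Q1 Q2 E A : Type*}

/-- A run `q →s q'` over a finite event sequence. -/
inductive Run (S : LFSA Q E A) : Q → List E → Q → Prop
  | nil (q : Q) : Run S q [] q
  | cons {q q' q'' : Q} {e : E} {s : List E} :
      S.δ q e q' → Run S q' s q'' → Run S q (e :: s) q''

/-- Output (label sequence) of an event sequence. -/
def out (S : LFSA Q E A) (s : List E) : List A := s.filterMap S.lab

/-- Generated finite language. -/
def L (S : LFSA Q E A) : Set (List E) := {s | ∃ q0 ∈ S.Q0, ∃ q, S.Run q0 s q}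

/-- Current-state estimate after observing `σ`. -/
def M (S : LFSA Q E A) (σ : List A) : Set Q :=
  {q | ∃ q0 ∈ S.Q0, ∃ s : List E, S.out s = σ ∧ S.Run q0 s q}

/-- Reachability via a nonempty event sequence. -/
def ReachPlus (S : LFSA Q E A) (q q' : Q) : Prop := ∃ s : List E, s ≠ [] ∧ S.Run q s q'

/-- There is a transition cycle reachable from `q` (a cycle at `q` itself counts). -/
def CycleReachableFrom (S : LFSA Q E A) (q : Q) : Prop :=
  ∃ p : Q, (p = q ∨ S.ReachPlus q p) ∧ ∃ s : List E, s ≠ [] ∧ S.Run p s p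

/-- `*`-strong detectability. -/
def StarSD (S : LFSA Q E A) : Prop :=
  ∃ k : ℕ, 0 < k ∧ ∀ s ∈ S.L, ∀ σ : List A, σ <+: S.out s → k < σ.length →
    ∃ q : Q, S.M σ = {q}

/-- ω-strong detectability. -/
def OmegaSD (S : LFSA Q E A) : Prop :=
  ∃ k : ℕ, 0 < k ∧ ∀ (s : ℕ → E) (ρ : ℕ → Q), ρ 0 ∈ S.Q0 →
    (∀ n : ℕ, S.δ (ρ n) (s n) (ρ (n + 1))) →
    ∀ (n : ℕ) (σ : List A), σ <+: S.out (List.ofFn (fun i : Fin n => s i)) →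
      k < σ.length → ∃ q : Q, S.M σ = {q}

/-- Concurrent composition: observable transitions with equal labels synchronize,
unobservable transitions interleave. Events are pairs over `Option E` (`none` = ε). -/
def CC (S1 : LFSA Q1 E A) (S2 : LFSA Q2 E A) :
    LFSA (Q1 × Q2) (Option E × Option E) A where
  δ p ev p' :=
    match ev with
    | (some e, some e') =>
        (∃ a : A, S1.lab e = some a ∧ S2.lab e' = some a) ∧
          S1.δ p.1 e p'.1 ∧ S2.δ p.2 e' p'.2
    | (some e, none) => S1.lab e = none ∧ S1.δ p.1 e p'.1 ∧ p.2 = p'.2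
    | (none, some e') => S2.lab e' = none ∧ p.1 = p'.1 ∧ S2.δ p.2 e' p'.2
    | (none, none) => False
  Q0 := {p | p.1 ∈ S1.Q0 ∧ p.2 ∈ S2.Q0}
  lab ev := ev.1.bind S1.lab

/-- Left projection of an event sequence of a concurrent composition. -/
def lproj (s : List (Option E × Option E)) : List E := s.filterMap Prod.fst

/-- Right projection of an event sequence of a concurrent composition. -/
def rproj (s : List (Option E × Option E)) : List E := s.filterMap Prod.snd

/-- Unobservable reach of a set of states. -/
def UR (S : LFSA Q E A) (X : Set Q) : Set Q :=
  {q | ∃ q0 ∈ X, ∃ s : List E, S.out s = [] ∧ S.Run q0 s q}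

/-- One step of the observer (powerset construction). -/
def obsStep (S : LFSA Q E A) (x : Set Q) (a : A) : Set Q :=
  {q' | ∃ q ∈ x, ∃ (e : E) (p : Q), S.lab e = some a ∧ S.δ q e p ∧ q' ∈ S.UR {p}}

/-- Observer run (deterministic). -/
def obsRun (S : LFSA Q E A) (x : Set Q) (σ : List A) : Set Q := σ.foldl S.obsStep x

/-- The concurrent composition `CC(S_ε, Obs^ε)` of `S` (with events relabeled by their
labels) and a deterministic observer with step function `ostep` and initial state `x0`:
observable transitions move both components, unobservable ones move only the left one. -/
def CCObs (S : LFSA Q E A) (ostep : Set Q → A → Set Q) (x0 : Set Q) :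
    LFSA (Q × Set Q) E A where
  δ p e p' := S.δ p.1 e p'.1 ∧
    (∀ a : A, S.lab e = some a → p'.2 = ostep p.2 a) ∧
    (S.lab e = none → p'.2 = p.2)
  Q0 := {p | p.1 ∈ S.Q0 ∧ p.2 = x0}
  lab := S.lab

/-- A state is reachable if it is an initial state or reachable from one. -/
def Reachable (S : LFSA Q E A) (q : Q) : Prop := ∃ q0 ∈ S.Q0, ∃ s : List E, S.Run q0 s q

/-- Restriction of an automaton to a set of allowed states. -/
def restrict (S : LFSA Q E A) (P : Set Q) : LFSA Q E A where
  δ q e q' := S.δ q e q' ∧ q ∈ P ∧ q' ∈ P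
  Q0 := S.Q0 ∩ P
  lab := S.lab

/-- A run all of whose states (including endpoints) lie in `P`. -/
inductive RunIn (S : LFSA Q E A) (P : Set Q) : Q → List E → Q → Prop
  | nil (q : Q) : q ∈ P → RunIn S P q [] q
  | cons {q q' q'' : Q} {e : E} {s : List E} :
      q ∈ P → S.δ q e q' → RunIn S P q' s q'' → RunIn S P q (e :: s) q''

/-- Normal subautomaton: all faulty transitions removed. -/
def Sn (S : LFSA Q E A) (Ef : Set E) : LFSA Q E A where
  δ q e q' := S.δ q e q' ∧ e ∉ Ef
  Q0 := S.Q0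
  lab := S.lab

/-- Faulty subautomaton: faulty transitions together with all their
predecessor and successor transitions. -/
def Sf (S : LFSA Q E A) (Ef : Set E) : LFSA Q E A where
  δ q e q' := S.δ q e q' ∧ ∃ c f d, f ∈ Ef ∧ S.δ c f d ∧
      ((q = c ∧ e = f ∧ q' = d) ∨ (c = q' ∨ S.ReachPlus q' c) ∨ (q = d ∨ S.ReachPlus d q))
  Q0 := S.Q0
  lab := S.lab

/-- `s` ends with a faulty event. -/
def EndsFaulty (Ef : Set E) (s : List E) : Prop := ∃ (t : List E) (e : E), e ∈ Ef ∧ s = t ++ [e]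

/-- `E_f`-diagnosability. -/
def Diag (S : LFSA Q E A) (Ef : Set E) : Prop :=
  ∃ k : ℕ, ∀ s ∈ S.L, EndsFaulty Ef s → ∀ s' : List E, s ++ s' ∈ S.L → k < s'.length →
    ∀ s'' ∈ S.L, S.out s'' = S.out (s ++ s') → ∃ e ∈ Ef, e ∈ s''

/-- `E_f`-predictability. -/
def Pred (S : LFSA Q E A) (Ef : Set E) : Prop :=
  ∃ k : ℕ, ∀ s ∈ S.L, EndsFaulty Ef s →
    ∃ s' : List E, s' <+: s ∧ (∀ e ∈ s', e ∉ Ef) ∧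
      ∀ u v : List E, u ++ v ∈ S.L → S.out s' = S.out u → (∀ e ∈ u, e ∉ Ef) →
        k < v.length → ∃ e ∈ Ef, e ∈ v

/-- Current-state opacity. -/
def CSO (S : LFSA Q E A) (QS : Set Q) : Prop :=
  ∀ q0 ∈ S.Q0, ∀ (s : List E) (q : Q), S.Run q0 s q → q ∈ QS →
    ∃ q0' ∈ S.Q0, ∃ (s' : List E) (q' : Q), S.Run q0' s' q' ∧ q' ∉ QS ∧ S.out s = S.out s'

/-- Initial-state opacity. -/
def ISO (S : LFSA Q E A) (QS : Set Q) : Prop :=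
  ∀ q0 ∈ S.Q0 ∩ QS, ∀ (s : List E) (q : Q), S.Run q0 s q →
    ∃ q0' ∈ S.Q0 \ QS, ∃ (s' : List E) (q' : Q), S.Run q0' s' q' ∧ S.out s = S.out s'

/-- Infinite-step opacity. -/
def InfSO (S : LFSA Q E A) (QS : Set Q) : Prop :=
  ∀ q0 ∈ S.Q0, ∀ (s1 : List E) (q1 : Q) (s2 : List E) (q2 : Q),
    S.Run q0 s1 q1 → S.Run q1 s2 q2 → q1 ∈ QS →
    ∃ q0' ∈ S.Q0, ∃ (s1' : List E) (q1' : Q) (s2' : List E) (q2' : Q),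
      S.Run q0' s1' q1' ∧ S.Run q1' s2' q2' ∧ q1' ∉ QS ∧
        S.out s1 = S.out s1' ∧ S.out s2 = S.out s2'

/-- `K`-step opacity. -/
def KSO (S : LFSA Q E A) (QS : Set Q) (K : ℕ) : Prop :=
  ∀ q0 ∈ S.Q0, ∀ (s1 : List E) (q1 : Q) (s2 : List E) (q2 : Q),
    S.Run q0 s1 q1 → S.Run q1 s2 q2 → q1 ∈ QS → (S.out s2).length ≤ K →
    ∃ q0' ∈ S.Q0, ∃ (s1' : List E) (q1' : Q) (s2' : List E) (q2' : Q),
      S.Run q0' s1' q1' ∧ S.Run q1' s2' q2' ∧ q1' ∉ QS ∧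
        S.out s1 = S.out s1' ∧ S.out s2 = S.out s2'

/-- Strong current-state opacity: the matching run is entirely non-secret. -/
def SCSO (S : LFSA Q E A) (QS : Set Q) : Prop :=
  ∀ q0 ∈ S.Q0, ∀ (s : List E) (q : Q), S.Run q0 s q → q ∈ QS →
    ∃ q0' ∈ S.Q0, ∃ (s' : List E) (q' : Q), S.RunIn QSᶜ q0' s' q' ∧ S.out s = S.out s'

/-- Strong initial-state opacity. -/
def SISO (S : LFSA Q E A) (QS : Set Q) : Prop :=
  ∀ q0 ∈ S.Q0 ∩ QS, ∀ (s : List E) (q : Q), S.Run q0 s q →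
    ∃ q0' ∈ S.Q0 \ QS, ∃ (s' : List E) (q' : Q), S.RunIn QSᶜ q0' s' q' ∧ S.out s = S.out s'

/-- Strong infinite-step opacity. -/
def SInfSO (S : LFSA Q E A) (QS : Set Q) : Prop :=
  ∀ q0 ∈ S.Q0, ∀ (s1 : List E) (q1 : Q) (s2 : List E) (q2 : Q),
    S.Run q0 s1 q1 → S.Run q1 s2 q2 → q1 ∈ QS →
    ∃ q0' ∈ S.Q0, ∃ (s1' : List E) (q1' : Q) (s2' : List E) (q2' : Q),
      S.RunIn QSᶜ q0' s1' q1' ∧ S.RunIn QSᶜ q1' s2' q2' ∧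
        S.out s1 = S.out s1' ∧ S.out s2 = S.out s2'

/-- Strong `K`-step opacity. -/
def SKSO (S : LFSA Q E A) (QS : Set Q) (K : ℕ) : Prop :=
  ∀ q0 ∈ S.Q0, ∀ (s1 : List E) (q1 : Q) (s2 : List E) (q2 : Q),
    S.Run q0 s1 q1 → S.Run q1 s2 q2 → q1 ∈ QS → (S.out s2).length ≤ K →
    ∃ q0' ∈ S.Q0, ∃ (s1' : List E) (q1' : Q) (s2' : List E) (q2' : Q),
      S.RunIn QSᶜ q0' s1' q1' ∧ S.RunIn QSᶜ q1' s2' q2' ∧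
        S.out s1 = S.out s1' ∧ S.out s2 = S.out s2'

/-- Observer step of the secret-deleted subautomaton `S_dss`. -/
def dssObsStep (S : LFSA Q E A) (QS : Set Q) : Set Q → A → Set Q :=
  (S.restrict QSᶜ).obsStep

/-- Initial observer state of the secret-deleted subautomaton. -/
def dssInit (S : LFSA Q E A) (QS : Set Q) : Set Q :=
  (S.restrict QSᶜ).UR (S.restrict QSᶜ).Q0

end LFSA

namespace LFSA

variable {Q E A : Type*}

theorem Run.append' {S : LFSA Q E A} {q q' q'' : Q} {s t : List E}
    (h : S.Run q s q') (h' : S.Run q' t q'') : S.Run q (s ++ t) q'' := by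
  induction h with
  | nil => exact h'
  | cons hd _ ih => exact Run.cons hd (ih h')

theorem out_append' (S : LFSA Q E A) (s t : List E) :
    S.out (s ++ t) = S.out s ++ S.out t := List.filterMap_append (l := s) (l' := t) (f := S.lab)

/-- `x` is closed under unobservable reach. -/
def URC (S : LFSA Q E A) (x : Set Q) : Prop :=
  ∀ q ∈ x, ∀ (t : List E) (q' : Q), S.out t = [] → S.Run q t q' → q' ∈ x

theorem URC_UR (S : LFSA Q E A) (X : Set Q) : S.URC (S.UR X) := by
  rintro q ⟨q0, hq0, s, hs, hr⟩ t q' ht hrt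
  exact ⟨q0, hq0, s ++ t, by rw [out_append', hs, ht]; rfl, hr.append' hrt⟩

theorem URC_obsStep (S : LFSA Q E A) (x : Set Q) (a : A) : S.URC (S.obsStep x a) := by
  rintro q ⟨q2, hq2, e, p, hle, hd, hur⟩ t q' ht hrt
  exact ⟨q2, hq2, e, p, hle, hd, S.URC_UR {p} q hur t q' ht hrt⟩

theorem mem_obsRun_of_run {S : LFSA Q E A} :
    ∀ (s : List E) (q1 q : Q), S.Run q1 s q → ∀ x : Set Q, q1 ∈ x → S.URC x →
      q ∈ S.obsRun x (S.out s) := by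
  intro s
  induction s with
  | nil =>
      intro q1 q h x hx _
      cases h; exact hx
  | cons e s ih =>
      intro q1 q h x hx hc
      cases h with
      | cons hd tl =>
        rename_i qm
        cases hle : S.lab e with
        | none =>
            have hq' : qm ∈ x :=
              hc q1 hx [e] qm (by simp [out, hle]) (Run.cons hd (Run.nil _))
            have ho : S.out (e :: s) = S.out s := by simp [out, hle]
            rw [ho]; exact ih qm q tl x hq' hc
        | some a =>
            have ho : S.out (e :: s) = a :: S.out s := by simp [out, hle]
            rw [ho]
            show q ∈ S.obsRun (S.obsStep x a) (S.out s)
            exact ih qm q tl _ ⟨q1, hx, e, qm, hle, hd, qm, rfl, [], rfl, Run.nil qm⟩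
              (S.URC_obsStep x a)

theorem run_of_mem_obsRun {S : LFSA Q E A} :
    ∀ (σ : List A) (x : Set Q) (q : Q), q ∈ S.obsRun x σ →
      ∃ q1 ∈ x, ∃ s : List E, S.out s = σ ∧ S.Run q1 s q := by
  intro σ
  induction σ with
  | nil => intro x q h; exact ⟨q, h, [], rfl, Run.nil q⟩
  | cons a σ ih =>
      intro x q h
      obtain ⟨q1, hq1, s, hs, hr⟩ := ih (S.obsStep x a) q h
      obtain ⟨q2, hq2, e, p, hle, hd, q0', hq0', t, ht, hrt⟩ := hq1
      rw [Set.mem_singleton_iff] at hq0'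
      subst hq0'
      refine ⟨q2, hq2, e :: (t ++ s), ?_, Run.cons hd (hrt.append' hr)⟩
      have : S.out (e :: (t ++ s)) = a :: (S.out t ++ S.out s) := by
        simp [out, hle, List.filterMap_append]
      rw [this, ht, hs]; rfl

theorem ccobs_run {S : LFSA Q E A} {ostep : Set Q → A → Set Q} {x0 : Set Q} :
    ∀ (s : List E) (p p' : Q × Set Q),
      (S.CCObs ostep x0).Run p s p' →
      S.Run p.1 s p'.1 ∧ p'.2 = List.foldl ostep p.2 (S.out s) := by
  intro s
  induction s with
  | nil => intro p p' h; cases h; exact ⟨Run.nil _, rfl⟩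
  | cons e s ih =>
      intro p p' h
      cases h with
      | cons hd tl =>
        rename_i pm
        obtain ⟨hδ, hsome, hnone⟩ := hd
        obtain ⟨hr, hx⟩ := ih pm p' tl
        cases hle : S.lab e with
        | none =>
            refine ⟨Run.cons hδ hr, ?_⟩
            have ho : S.out (e :: s) = S.out s := by simp [out, hle]
            rw [ho, hx, hnone hle]
        | some a =>
            refine ⟨Run.cons hδ hr, ?_⟩
            have ho : S.out (e :: s) = a :: S.out s := by simp [out, hle]
            rw [ho, hx, hsome a hle]; rfl

theorem run_lift {S : LFSA Q E A} {ostep : Set Q → A → Set Q} {x0 : Set Q} :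
    ∀ (s : List E) (q q' : Q), S.Run q s q' → ∀ x : Set Q,
      (S.CCObs ostep x0).Run (q, x) s (q', List.foldl ostep x (S.out s)) := by
  intro s
  induction s with
  | nil => intro q q' h x; cases h; exact Run.nil _
  | cons e s ih =>
      intro q q' h x
      cases h with
      | cons hd tl =>
        rename_i qm
        cases hle : S.lab e with
        | none =>
            have ho : S.out (e :: s) = S.out s := by simp [out, hle]
            rw [ho]
            refine Run.cons ?_ (ih qm q' tl x)
            refine ⟨hd, ?_, ?_⟩
            · intro a ha; rw [hle] at ha; cases ha
            · intro _; rfl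
        | some a =>
            have ho : S.out (e :: s) = a :: S.out s := by simp [out, hle]
            rw [ho]
            refine Run.cons ?_ (ih qm q' tl (ostep x a))
            refine ⟨hd, ?_, ?_⟩
            · intro b hb; rw [hle] at hb; cases hb; rfl
            · intro hn; rw [hle] at hn; cases hn

theorem RunIn.head_mem' {S : LFSA Q E A} {P : Set Q} {q : Q} {s : List E} {q' : Q}
    (h : S.RunIn P q s q') : q ∈ P := by
  cases h with
  | nil _ h => exact h
  | cons h _ _ => exact h

theorem RunIn.toRestrict {S : LFSA Q E A} {P : Set Q} {q : Q} {s : List E} {q' : Q}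
    (h : S.RunIn P q s q') : (S.restrict P).Run q s q' := by
  induction h with
  | nil q _ => exact Run.nil q
  | cons hq hd tl ih => exact Run.cons ⟨hd, hq, tl.head_mem'⟩ ih

theorem runIn_of_restrict {S : LFSA Q E A} {P : Set Q} {s : List E} {q q' : Q}
    (h : (S.restrict P).Run q s q') : q ∈ P → S.RunIn P q s q' := by
  induction h with
  | nil q => exact fun hq => RunIn.nil q hq
  | cons hd tl ih => exact fun hq => RunIn.cons hq hd.1 (ih hd.2.2)

end LFSA

/-- concurrent-composition characterization of strong
initial-state opacity. -/
theorem stmt15 {Q E A : Type*} (S : LFSA Q E A) (QS : Set Q) :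
    S.SISO QS ↔
      ((S.Q0.Nonempty → ¬ S.Q0 ⊆ QS) ∧
        ∀ q0 ∈ S.Q0 ∩ QS, ∀ (s : List E) (p : Q × Set Q),
          (S.CCObs (S.dssObsStep QS) (S.dssInit QS)).Run (q0, S.dssInit QS) s p →
            p.2.Nonempty) := by
  constructor
  · intro hS
    constructor
    · rintro ⟨q0, hq0⟩ hsub
      obtain ⟨q0', hq0', -⟩ := hS q0 ⟨hq0, hsub hq0⟩ [] q0 (LFSA.Run.nil q0)
      exact hq0'.2 (hsub hq0'.1)
    · intro q0 hq0 s p hrun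
      obtain ⟨hr, hx⟩ := LFSA.ccobs_run s (q0, S.dssInit QS) p hrun
      obtain ⟨q0', hq0', s', q', hri, hout⟩ := hS q0 hq0 s p.1 hr
      have hq0'' : q0' ∈ (S.restrict QSᶜ).UR (S.restrict QSᶜ).Q0 :=
        ⟨q0', ⟨hq0'.1, hq0'.2⟩, [], rfl, LFSA.Run.nil q0'⟩
      have hmem := LFSA.mem_obsRun_of_run s' q0' q' hri.toRestrict
        (S.dssInit QS) hq0'' (LFSA.URC_UR _ _)
      have hmem' : q' ∈ List.foldl (S.dssObsStep QS) (S.dssInit QS) (S.out s') := hmem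
      rw [← hout] at hmem'
      exact ⟨q', hx ▸ hmem'⟩
  · rintro ⟨-, h2⟩ q0 hq0 s q hr
    have hcc := LFSA.run_lift (ostep := S.dssObsStep QS) (x0 := S.dssInit QS)
      s q0 q hr (S.dssInit QS)
    obtain ⟨q', hq'⟩ := h2 q0 hq0 s _ hcc
    obtain ⟨q1, hq1, s2, hs2, hr2⟩ :=
      LFSA.run_of_mem_obsRun (S := S.restrict QSᶜ) (S.out s) (S.dssInit QS) q' hq'
    obtain ⟨q0', hq0', t, ht, hrt⟩ := hq1
    have ht' : S.out t = [] := ht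
    have hs2' : S.out s2 = S.out s := hs2
    refine ⟨q0', ⟨hq0'.1, hq0'.2⟩, t ++ s2, q',
      LFSA.runIn_of_restrict (hrt.append' hr2) hq0'.2, ?_⟩
    rw [LFSA.out_append', ht', hs2']; rfl
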